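/- arXiv:1808.04349 — 7 statements merged into one kernel-verified Lean document; each statement's English description precedes it below -/
import Mathlib

section
/- For any n ≥ 2 and any round horizon h with 1 ≤ h ≤ n-1, in a 1-interval-connected dynamic ring on n nodes (at most one edge missing per round), if an agent is placed on each of the n nodes and all agents attempt to move one step clockwise each round (an agent is blocked in a round only if its clockwise edge is the missing edge), then after h rounds at least n - h of the agents have each visited exactly h + 1 distinct nodes. -/
/-- In a 1-interval-connected dynamic ring on `n` nodes (at most one edge missing
per round, the missing edge in round `r` being `miss r`, where the clockwise edge
at node `v` is labelled `v`), if an agent is placed on each node and every agent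
attempts to move clockwise each round (blocked only when its clockwise edge is the
missing edge), then after `h` rounds (`1 ≤ h ≤ n-1`) at least `n - h` agents have
each visited exactly `h + 1` distinct nodes. -/
theorem stmt0 (n : ℕ) [NeZero n] (hn : 2 ≤ n) (miss : ℕ → Option (ZMod n))
    (p : ZMod n → ℕ → ZMod n)
    (hp0 : ∀ s, p s 0 = s)
    (hpstep : ∀ s r, p s (r + 1) =
      if miss r = some (p s r) then p s r else p s r + 1)
    (h : ℕ) (h1 : 1 ≤ h) (h2 : h ≤ n - 1) :
    n - h ≤ (Finset.univ.filter (fun s : ZMod n =>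
      ((Finset.range (h + 1)).image (fun r => p s r)).card = h + 1)).card := by
  classical
  have hn0 : 0 < n := Nat.lt_of_lt_of_le Nat.zero_lt_two hn
  have key : ∀ s : ZMod n, ∀ r : ℕ,
      (∀ r' < r, miss r' ≠ some (p s r')) → p s r = s + (r : ℕ) := by
    intro s r
    induction r with
    | zero => intro _; simp [hp0]
    | succ r ih =>
      intro hb
      have h1' := ih (fun r' hr' => hb r' (Nat.lt_succ_of_lt hr'))
      rw [hpstep, if_neg (hb r (Nat.lt_succ_self r)), h1']
      push_cast
      ring
  have hcastinj : ∀ a b : ℕ, a < n → b < n → (a : ZMod n) = (b : ZMod n) → a = b := by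
    intro a b ha hb hab
    have := congrArg ZMod.val hab
    rwa [ZMod.val_cast_of_lt ha, ZMod.val_cast_of_lt hb] at this
  set U : Finset (ZMod n) :=
    Finset.univ.filter (fun s => ∀ r < h, miss r ≠ some (p s r)) with hU
  set B : Finset (ZMod n) :=
    Finset.univ.filter (fun s => ¬ ∀ r < h, miss r ≠ some (p s r)) with hB
  -- U is contained in the target set
  have hsub : U ⊆ Finset.univ.filter (fun s : ZMod n =>
      ((Finset.range (h + 1)).image (fun r => p s r)).card = h + 1) := by
    intro s hs
    rw [hU, Finset.mem_filter] at hs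
    obtain ⟨-, hs⟩ := hs
    rw [Finset.mem_filter]
    refine ⟨Finset.mem_univ _, ?_⟩
    have heq : ∀ r ∈ Finset.range (h + 1), p s r = s + (r : ℕ) := by
      intro r hr
      rw [Finset.mem_range, Nat.lt_succ_iff] at hr
      exact key s r (fun r' hr' => hs r' (lt_of_lt_of_le hr' hr))
    rw [Finset.image_congr (fun r hr => heq r hr)]
    rw [Finset.card_image_of_injOn, Finset.card_range]
    intro a ha b hb hab
    rw [Finset.mem_coe, Finset.mem_range, Nat.lt_succ_iff] at ha hb
    have haltn : a < n := lt_of_le_of_lt (le_trans ha h2) (Nat.sub_lt hn0 Nat.one_pos)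
    have hbltn : b < n := lt_of_le_of_lt (le_trans hb h2) (Nat.sub_lt hn0 Nat.one_pos)
    exact hcastinj a b haltn hbltn (by simpa using hab)
  -- B has at most h elements
  have hBcard : B.card ≤ h := by
    have : B.card ≤ (Finset.range h).card := by
      apply Finset.card_le_card_of_injOn
        (fun s => if hs : ∃ r, r < h ∧ miss r = some (p s r) then Nat.find hs else 0)
      · intro s hs
        rw [hB, Finset.mem_coe, Finset.mem_filter] at hs
        obtain ⟨-, hs⟩ := hs
        push_neg at hs
        obtain ⟨r, hr, hmr⟩ := hs
        have hex : ∃ r, r < h ∧ miss r = some (p s r) := ⟨r, hr, hmr⟩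
        dsimp only
        rw [dif_pos hex]
        exact Finset.mem_range.mpr (Nat.find_spec hex).1
      · intro s hs s' hs' hff
        have hs2 : ¬ ∀ r < h, miss r ≠ some (p s r) := by
          have := Finset.mem_coe.mp hs
          rw [Finset.mem_filter] at this; exact this.2
        have hs2' : ¬ ∀ r < h, miss r ≠ some (p s' r) := by
          have := Finset.mem_coe.mp hs'
          rw [Finset.mem_filter] at this; exact this.2
        push_neg at hs2 hs2'
        obtain ⟨r, hr, hmr⟩ := hs2
        obtain ⟨r', hr', hmr'⟩ := hs2'
        have hex : ∃ r, r < h ∧ miss r = some (p s r) := ⟨r, hr, hmr⟩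
        have hex' : ∃ r, r < h ∧ miss r = some (p s' r) := ⟨r', hr', hmr'⟩
        simp only [dif_pos hex, dif_pos hex'] at hff
        set k := Nat.find hex with hk
        have hkspec := Nat.find_spec hex
        have hkspec' := Nat.find_spec hex'
        rw [← hff] at hkspec'
        have hps : p s k = s + (k : ℕ) := by
          apply key
          intro r0 hr0
          intro hcon
          exact (Nat.find_min hex hr0) ⟨lt_trans hr0 hkspec.1, hcon⟩
        have hps' : p s' k = s' + (k : ℕ) := by
          apply key
          intro r0 hr0
          intro hcon
          have hr0' : r0 < Nat.find hex' := by rw [← hff]; exact hr0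
          exact (Nat.find_min hex' hr0') ⟨lt_trans hr0 hkspec.1, hcon⟩
        have : some (p s k) = some (p s' k) := by rw [← hkspec.2, ← hkspec'.2]
        have hpp : p s k = p s' k := Option.some.inj this
        rw [hps, hps'] at hpp
        exact add_right_cancel hpp
    simpa using this
  have hUB : U.card + B.card = n := by
    rw [hU, hB, Finset.card_filter_add_card_filter_not]
    simp [ZMod.card]
  have hUcard : n - h ≤ U.card := by omega
  exact le_trans hUcard (Finset.card_le_card hsub)
end

section
/- Model the blocking pattern as a function f : ℕ → Fin n ∪ {⊥}, where f(r) is the (at most one) missing edge in round r. Define the position of an agent starting at node s ∈ ZMod n by p_s(0) = s and p_s(r+1) = p_s(r) + 1 if edge p_s(r) is not missing at round r, else p_s(r+1) = p_s(r). Then for every h with 1 ≤ h ≤ n-1, the set of starting nodes s such that p_s(h) = s + h has cardinality at least n - h. -/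
/-- Blocking pattern `miss : ℕ → Option (ZMod n)` gives the (at most one) missing
edge each round, where the clockwise edge at node `v` is labelled `v`.  The agent
starting at `s` has position `p s`, with `p s 0 = s` and
`p s (r+1) = p s r + 1` unless the edge `p s r` is missing at round `r`.
Then for every `h` with `1 ≤ h ≤ n - 1`, the set of starting nodes `s` with
`p s h = s + h` has cardinality at least `n - h`. -/
theorem stmt1 (n : ℕ) [NeZero n] (hn : 2 ≤ n) (miss : ℕ → Option (ZMod n))
    (p : ZMod n → ℕ → ZMod n)
    (hp0 : ∀ s, p s 0 = s)
    (hpstep : ∀ s r, p s (r + 1) =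
      if miss r = some (p s r) then p s r else p s r + 1)
    (h : ℕ) (h1 : 1 ≤ h) (h2 : h ≤ n - 1) :
    n - h ≤ (Finset.univ.filter (fun s : ZMod n => p s h = s + (h : ZMod n))).card := by
  set G : ℕ → Finset (ZMod n) :=
    fun r => Finset.univ.filter (fun s : ZMod n => p s r = s + (r : ZMod n)) with hG
  suffices key : ∀ r : ℕ, n - r ≤ (G r).card from key h
  intro r
  induction r with
  | zero =>
      have : G 0 = Finset.univ := by
        apply Finset.eq_univ_iff_forall.mpr
        intro s
        simp [hG, hp0 s]
      rw [this]
      simp [ZMod.card n]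
  | succ r ih =>
      have step : ∀ s ∈ G r, miss r ≠ some (s + (r : ZMod n)) → s ∈ G (r + 1) := by
        intro s hs hne
        simp only [hG, Finset.mem_filter, Finset.mem_univ, true_and] at hs ⊢
        rw [hpstep, hs, if_neg (by exact fun hc => hne hc)]
        push_cast
        ring
      cases hm : miss r with
      | none =>
          have hsub : G r ⊆ G (r + 1) := by
            intro s hs
            exact step s hs (by simp [hm])
          calc n - (r + 1) ≤ n - r := Nat.sub_le_sub_left (Nat.le_succ r) n
            _ ≤ (G r).card := ih
            _ ≤ (G (r + 1)).card := Finset.card_le_card hsub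
      | some m =>
          have hsub : (G r).erase (m - (r : ZMod n)) ⊆ G (r + 1) := by
            intro s hs
            obtain ⟨hne, hs⟩ := Finset.mem_erase.mp hs
            refine step s hs ?_
            rw [hm]
            intro hc
            apply hne
            have := Option.some.inj hc
            rw [this]; ring
          calc n - (r + 1) = n - r - 1 := by omega
            _ ≤ (G r).card - 1 := Nat.sub_le_sub_right ih 1
            _ ≤ ((G r).erase (m - (r : ZMod n))).card := by
                rw [Finset.card_erase_eq_ite]
                split <;> omega
            _ ≤ (G (r + 1)).card := Finset.card_le_card hsub
end

section
/- Two agents start at antipodal nodes of a 1-interval-connected dynamic ring on n nodes, and must reach a given target pair of antipodal nodes. Model each round by a bit b_r ∈ {0,1} per blocked direction: during an interval of T = ⌈n/2⌉ rounds, if the counter-clockwise traversal of a path of length x ≤ ⌊n/2⌋ is blocked in more than T - x rounds (so the counter-clockwise route fails), then the clockwise traversal of the complementary path of length ⌈n/2⌉ - x succeeds within the same T rounds. Formally: given a function miss : Fin T → Option (Fin n) (the missing edge each round), for any x ≤ ⌊n/2⌋, either an agent moving counter-clockwise along a fixed path of x consecutive edges completes all x edge-traversals within T rounds (being delayed only in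 rounds where the next needed edge is missing), or an agent moving clockwise along the complementary arc of the antipodal pair completes its traversal within T rounds. -/
/-- Two agents at antipodal nodes must reach a target antipodal pair within
`T = ⌈n/2⌉` rounds.  `miss r` is the (at most one) missing edge at round `r`.
The counter-clockwise route is a path `P₁` of `x ≤ ⌊n/2⌋` edges; the clockwise
complementary route is a path `P₂` of `T - x` edges, disjoint from `P₁`.  An agent
traversing a path of length `ℓ` completes within `T` rounds iff it is delayed
(i.e. the missing edge lies on its path) in at most `T - ℓ` rounds.  Then either
the counter-clockwise traversal completes within `T` rounds, or the clockwise
traversal of the complementary path does. -/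
theorem stmt4 (n x T : ℕ) [NeZero n] (hT : T = (n + 1) / 2) (hx : x ≤ n / 2)
    (miss : Fin T → Option (ZMod n)) (P1 P2 : Finset (ZMod n))
    (hdisj : Disjoint P1 P2) (h1 : P1.card = x) (h2 : P2.card = T - x) :
    (Finset.univ.filter (fun r : Fin T => ∃ e ∈ P1, miss r = some e)).card ≤ T - x ∨
    (Finset.univ.filter (fun r : Fin T => ∃ e ∈ P2, miss r = some e)).card ≤ x := by
  set A := Finset.univ.filter (fun r : Fin T => ∃ e ∈ P1, miss r = some e) with hA
  set B := Finset.univ.filter (fun r : Fin T => ∃ e ∈ P2, miss r = some e) with hB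
  have hdAB : Disjoint A B := by
    rw [Finset.disjoint_left]
    intro r hrA hrB
    simp only [hA, hB, Finset.mem_filter] at hrA hrB
    obtain ⟨-, e1, he1, hm1⟩ := hrA
    obtain ⟨-, e2, he2, hm2⟩ := hrB
    have : e1 = e2 := by rw [hm1] at hm2; exact Option.some.inj hm2
    exact Finset.disjoint_left.mp hdisj he1 (this ▸ he2)
  have hsum : A.card + B.card ≤ T := by
    calc A.card + B.card = (A ∪ B).card := (Finset.card_union_of_disjoint hdAB).symm
    _ ≤ (Finset.univ : Finset (Fin T)).card := Finset.card_le_card (Finset.subset_univ _)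
    _ = T := Finset.card_univ.trans (Fintype.card_fin T)
  have hxT : x ≤ T := by omega
  omega
end

section
/- Pigeonhole for shifted intervals: let n ≥ 2, T = ⌈n/k⌉ for some k ≥ 1 dividing into consideration, and suppose an agent must traverse a directed path of x edges within T rounds, being delayed exactly in rounds whose missing edge lies on its remaining path, where at most one edge is missing per round. If the agent fails (is delayed in more than T - x rounds), then there are at least T - x + 1 rounds among the T in which the missing edge is NOT on the complementary path of length T - x (traversed in the opposite direction), hence an agent on the complementary path traversing opposite-direction completes within T rounds. -/
/-- Counting lemma for the placement phase: at most one edge is missing per round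
(`miss r`), `P₁` (length `x`) and `P₂` (length `T - x`) are edge-disjoint paths,
and an agent traversing a path of length `ℓ` completes within `T` rounds iff it
is delayed (its path contains the missing edge) in at most `T - ℓ` rounds.  If
the `P₁`-agent fails (delayed in more than `T - x` rounds), then in at least
`T - x + 1` of the `T` rounds the missing edge is not on `P₂`, hence the agent on
the complementary path `P₂` is delayed at most `x` times and completes within `T`
rounds. -/
theorem stmt12 (n T x : ℕ) [NeZero n] (hx : x ≤ T)
    (miss : Fin T → Option (ZMod n)) (P1 P2 : Finset (ZMod n))
    (hdisj : Disjoint P1 P2) (h1 : P1.card = x) (h2 : P2.card = T - x)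
    (hfail : T - x <
      (Finset.univ.filter (fun r : Fin T => ∃ e ∈ P1, miss r = some e)).card) :
    T - x + 1 ≤
      (Finset.univ.filter (fun r : Fin T => ∀ e ∈ P2, miss r ≠ some e)).card ∧
    (Finset.univ.filter (fun r : Fin T => ∃ e ∈ P2, miss r = some e)).card ≤ x := by
  classical
  set A := Finset.univ.filter (fun r : Fin T => ∃ e ∈ P1, miss r = some e) with hA
  set C := Finset.univ.filter (fun r : Fin T => ∀ e ∈ P2, miss r ≠ some e) with hC
  set B := Finset.univ.filter (fun r : Fin T => ∃ e ∈ P2, miss r = some e) with hB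
  have hAC : A ⊆ C := by
    intro r hr
    simp only [hA, hC, Finset.mem_filter, Finset.mem_univ, true_and] at hr ⊢
    obtain ⟨e, he1, hme⟩ := hr
    intro e' he2 hme'
    rw [hme] at hme'
    obtain rfl : e = e' := Option.some_injective _ hme'
    exact (Finset.disjoint_left.mp hdisj he1) he2
  have hcardAC : A.card ≤ C.card := Finset.card_le_card hAC
  have hAT : A.card ≤ T := by
    simpa using Finset.card_le_card (Finset.subset_univ A)
  have hBC : B.card + C.card = T := by
    have : B = Cᶜ := by
      ext r
      simp only [hB, hC, Finset.mem_filter, Finset.mem_univ, true_and,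
        Finset.mem_compl, not_forall]
      push_neg
      exact exists_congr fun e => exists_prop.symm
    rw [this, Finset.card_compl]
    have hCT : C.card ≤ T := by
      simpa using Finset.card_le_card (Finset.subset_univ C)
    simp only [Fintype.card_fin]
    omega
  constructor <;> omega
end

section
/- In a static ring of n nodes with k agents placed on k consecutive nodes, where in every round the whole configuration is a rotation of the initial one by at most one position (each round, the configuration rotates by +1, -1, or 0), any schedule that visits every node infinitely often has some node whose consecutive visits are at least n - k rounds apart. -/
/-- The occupancy predicate: node `v` is visited at round `r`. -/
def stmt13Vis (n k : ℕ) (s : ℕ → ℤ) (v : ZMod n) (r : ℕ) : Prop :=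
  ∃ j : ℕ, j < k ∧ ((s r + (j : ℤ) : ℤ) : ZMod n) = v

/-- A ±1 walk moves at most `b - a` in `b - a` steps. -/
lemma stmt13_walk (s : ℕ → ℤ) (hstep : ∀ r, |s (r + 1) - s r| ≤ 1) :
    ∀ a b : ℕ, a ≤ b → |s b - s a| ≤ (b : ℤ) - a := by
  intro a b hab
  induction b, hab using Nat.le_induction with
  | base => simp
  | succ m hm ih =>
    have h1 := hstep m
    have h2 : s (m + 1) - s a = (s (m + 1) - s m) + (s m - s a) := by ring
    have h3 := abs_add_le (s (m + 1) - s m) (s m - s a)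
    rw [← h2] at h3
    push_cast
    linarith

/-- Local-visibility lower bound core: `k < n` agents occupy the rotating block
`{s r, s r + 1, …, s r + k - 1}` (in `ZMod n`) with offset `s : ℕ → ℤ`, `s 0 = 0`
and `|s (r+1) - s r| ≤ 1`.  If every node is visited infinitely often, then some
node has two consecutive visits at least `n - k` rounds apart. -/
theorem stmt13 (n k : ℕ) [NeZero n] (hk : 1 ≤ k) (hkn : k < n) (s : ℕ → ℤ)
    (hs0 : s 0 = 0) (hstep : ∀ r, |s (r + 1) - s r| ≤ 1)
    (hio : ∀ (v : ZMod n) (r : ℕ), ∃ r', r ≤ r' ∧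
      ∃ j : ℕ, j < k ∧ ((s r' + (j : ℤ) : ℤ) : ZMod n) = v) :
    ∃ (v : ZMod n) (r0 r1 : ℕ), r0 < r1 ∧
      (∃ j : ℕ, j < k ∧ ((s r0 + (j : ℤ) : ℤ) : ZMod n) = v) ∧
      (∃ j : ℕ, j < k ∧ ((s r1 + (j : ℤ) : ℤ) : ZMod n) = v) ∧
      (∀ r, r0 < r → r < r1 → ¬ ∃ j : ℕ, j < k ∧ ((s r + (j : ℤ) : ℤ) : ZMod n) = v) ∧
      n - k ≤ r1 - r0 := by
  classical
  by_contra hcon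
  push_neg at hcon
  -- hcon : ∀ v r0 r1, r0 < r1 → Vis v r0 → Vis v r1 → (no visit between) → r1 - r0 < n - k
  have hkn' : (k : ℤ) < n := by exact_mod_cast hkn
  -- first visit times
  have hF0 : ∀ v : ZMod n, ∃ r : ℕ, stmt13Vis n k s v r := by
    intro v
    obtain ⟨r', -, h⟩ := hio v 0
    exact ⟨r', h⟩
  choose F hF using hF0
  -- confinement: after its first visit, all visits of v have s in a fixed interval
  have conf : ∀ v : ZMod n, ∃ a : ℤ, ((a + ((k : ℤ) - 1) : ℤ) : ZMod n) = v ∧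
      ∀ r, F v ≤ r → stmt13Vis n k s v r → a ≤ s r ∧ s r ≤ a + ((k : ℤ) - 1) := by
    intro v
    obtain ⟨j0, hj0k, hj0⟩ := hF v
    have hj0k' : (j0 : ℤ) < k := by exact_mod_cast hj0k
    refine ⟨s (F v) + j0 - ((k : ℤ) - 1), ?_, ?_⟩
    · rw [show s (F v) + (j0 : ℤ) - ((k : ℤ) - 1) + ((k : ℤ) - 1) = s (F v) + j0 by ring]
      exact hj0
    · intro r
      induction r using Nat.strong_induction_on with
      | _ r ih =>
        intro hFr hvr
        rcases eq_or_lt_of_le hFr with he | hlt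
        · rw [← he]
          constructor <;> linarith
        · set Sf := (Finset.range r).filter
            (fun t => F v ≤ t ∧ stmt13Vis n k s v t) with hSf
          have hne : Sf.Nonempty :=
            ⟨F v, Finset.mem_filter.mpr ⟨Finset.mem_range.mpr hlt, le_refl _, ⟨j0, hj0k, hj0⟩⟩⟩
          set r' := Sf.max' hne with hr'
          obtain ⟨hmr, hFr', hvr'⟩ := Finset.mem_filter.mp (Sf.max'_mem hne)
          have hr'r : r' < r := Finset.mem_range.mp hmr
          have ihb := ih r' hr'r hFr' hvr'
          have hbet : ∀ t, r' < t → t < r → ¬ stmt13Vis n k s v t := by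
            intro t ht1 ht2 hvt
            have hmem : t ∈ Sf :=
              Finset.mem_filter.mpr ⟨Finset.mem_range.mpr ht2, le_trans hFr' (le_of_lt ht1), hvt⟩
            have := Sf.le_max' t hmem
            omega
          have hgap := hcon v r' r hr'r hvr' hvr
            (fun t ht1 ht2 j hj hq => hbet t ht1 ht2 ⟨j, hj, hq⟩)
          have hgap' : (r : ℤ) - r' ≤ (n : ℤ) - k - 1 := by omega
          have habs := abs_le.mp (stmt13_walk s hstep r' r (le_of_lt hr'r))
          obtain ⟨j, hjk, hj⟩ := hvr
          have hjk' : (j : ℤ) < k := by exact_mod_cast hjk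
          have hcong : ((s r + (j : ℤ) : ℤ) : ZMod n)
              = ((s (F v) + (j0 : ℤ) : ℤ) : ZMod n) := by rw [hj, hj0]
          rw [ZMod.intCast_eq_intCast_iff] at hcong
          obtain ⟨m, hm⟩ := Int.ModEq.dvd hcong
          -- hm : s (F v) + j0 - (s r + j) = n * m
          rcases lt_trichotomy m 0 with hm0 | hm0 | hm0
          · exfalso
            have h1 : (n : ℤ) * m ≤ (n : ℤ) * (-1) :=
              mul_le_mul_of_nonneg_left (by omega) (by positivity)
            -- s r large
            linarith [habs.1, habs.2, ihb.1, ihb.2]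
          · rw [hm0, mul_zero] at hm
            have hj0' : (0 : ℤ) ≤ (j : ℤ) := Int.natCast_nonneg j
            constructor <;> linarith
          · exfalso
            have h1 : (n : ℤ) * 1 ≤ (n : ℤ) * m :=
              mul_le_mul_of_nonneg_left (by omega) (by positivity)
            linarith [habs.1, habs.2, ihb.1, ihb.2]
  -- choose confinement intervals
  choose A hA1 hA2 using conf
  have hAinj : Function.Injective A := by
    intro v1 v2 h
    rw [← hA1 v1, ← hA1 v2, h]
  set T := Finset.image A Finset.univ with hT
  have hTcard : T.card = n := by
    rw [hT, Finset.card_image_of_injective _ hAinj, Finset.card_univ, ZMod.card]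
  have hTne : T.Nonempty := by
    rw [← Finset.card_pos, hTcard]
    exact Nat.pos_of_ne_zero (NeZero.ne n)
  obtain ⟨v1, -, hv1⟩ := Finset.mem_image.mp (T.min'_mem hTne)
  obtain ⟨v2, -, hv2⟩ := Finset.mem_image.mp (T.max'_mem hTne)
  have hsub : T ⊆ Finset.Icc (T.min' hTne) (T.max' hTne) := by
    intro x hx
    rw [Finset.mem_Icc]
    exact ⟨T.min'_le x hx, T.le_max' x hx⟩
  have hcard2 := Finset.card_le_card hsub
  rw [hTcard, Int.card_Icc] at hcard2
  have hspread : A v1 + (n : ℤ) - 1 ≤ A v2 := by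
    rw [hv1, hv2]
    omega
  -- the far-apart witness rounds
  obtain ⟨t2, ht2ge, ht2vis⟩ := hio v2 (max (F v2) (F v1 + 1))
  have ht2F2 : F v2 ≤ t2 := le_trans (le_max_left _ _) ht2ge
  have ht2F1 : F v1 < t2 := lt_of_lt_of_le (Nat.lt_succ_self _) (le_trans (le_max_right _ _) ht2ge)
  have hband2 := hA2 v2 t2 ht2F2 ht2vis
  -- r0 : last visit of v1 before t2
  set S0 := (Finset.range t2).filter (fun t => F v1 ≤ t ∧ stmt13Vis n k s v1 t) with hS0
  have hS0ne : S0.Nonempty :=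
    ⟨F v1, Finset.mem_filter.mpr ⟨Finset.mem_range.mpr ht2F1, le_refl _, hF v1⟩⟩
  set r0 := S0.max' hS0ne with hr0
  obtain ⟨h0a, hFr0, hvr0⟩ := Finset.mem_filter.mp (S0.max'_mem hS0ne)
  have hr0t2 : r0 < t2 := Finset.mem_range.mp h0a
  -- r1 : first visit of v1 after t2
  obtain ⟨rw', hrwge, hrwvis⟩ := hio v1 (t2 + 1)
  set S1 := (Finset.range (rw' + 1)).filter (fun t => t2 < t ∧ stmt13Vis n k s v1 t) with hS1
  have hS1ne : S1.Nonempty :=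
    ⟨rw', Finset.mem_filter.mpr ⟨Finset.mem_range.mpr (Nat.lt_succ_self _), by omega, hrwvis⟩⟩
  set r1 := S1.min' hS1ne with hr1d
  obtain ⟨h1a, ht2r1, hvr1⟩ := Finset.mem_filter.mp (S1.min'_mem hS1ne)
  have hr1le : r1 < rw' + 1 := Finset.mem_range.mp h1a
  -- t2 is not a visit of v1
  have ht2nv : ¬ stmt13Vis n k s v1 t2 := by
    intro hv
    have hb1 := hA2 v1 t2 (le_of_lt ht2F1) hv
    linarith [hband2.1, hb1.2]
  -- no visit of v1 strictly between r0 and r1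
  have hbet : ∀ t, r0 < t → t < r1 → ¬ stmt13Vis n k s v1 t := by
    intro t ht1 ht2' hv
    rcases lt_trichotomy t t2 with h | h | h
    · have hmem : t ∈ S0 :=
        Finset.mem_filter.mpr ⟨Finset.mem_range.mpr h, le_trans hFr0 (le_of_lt ht1), hv⟩
      have := S0.le_max' t hmem
      omega
    · exact ht2nv (h ▸ hv)
    · have hmem : t ∈ S1 := Finset.mem_filter.mpr ⟨Finset.mem_range.mpr (by omega), h, hv⟩
      have := S1.min'_le t hmem
      omega
  have hr0r1 : r0 < r1 := by omega
  have hgap := hcon v1 r0 r1 hr0r1 hvr0 hvr1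
    (fun t ht1 ht2 j hj hq => hbet t ht1 ht2 ⟨j, hj, hq⟩)
  -- but the gap is at least n - k : contradiction
  have hb0 := hA2 v1 r0 hFr0 hvr0
  have hb1 := hA2 v1 r1 (by omega) hvr1
  have habs := abs_le.mp (stmt13_walk s hstep t2 r1 (le_of_lt ht2r1))
  have hZ : (n : ℤ) - k ≤ (r1 : ℤ) - t2 := by linarith [hspread, hband2.1, hb1.2, habs.1]
  omega
end

section
/- If k agents on a line of ℓ nodes must each visit nodes so that collectively every node is visited once per window, the minimum possible idle time is at least 2ℓ/k; consequently, for patrolling an n-node dynamic ring where the adversary permanently removes one fixed edge (reducing to a line of n nodes), any k-agent patrolling algorithm has stable idle time at least 2n/k. -/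
/-- Line patrolling lower bound: `k` agents move on a path of `n` nodes one step
per round; if every node is visited in every window of `I` consecutive rounds,
then `I ≥ 2(n - k)/k`, i.e. `2(n - k) ≤ k·I`.  (Each agent can repeatedly cover
at most `⌊I/2⌋ + 1` distinct nodes, and `k·(⌊I/2⌋ + 1) ≥ n`.) -/
theorem stmt15 (n k I : ℕ) (hk : 1 ≤ k) (hkn : k ≤ n)
    (p : Fin k → ℕ → Fin n)
    (hstep : ∀ i r, (p i (r + 1)).val ≤ (p i r).val + 1 ∧
      (p i r).val ≤ (p i (r + 1)).val + 1)
    (hcover : ∀ (v : Fin n) (r : ℕ), ∃ r', r ≤ r' ∧ r' < r + I ∧ ∃ i, p i r' = v) :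
    2 * (n - k) ≤ k * I := by
  have hn : 0 < n := lt_of_lt_of_le hk hkn
  rcases Nat.eq_zero_or_pos I with hI0 | hIpos
  · obtain ⟨r', h1, h2, -⟩ := hcover ⟨0, hn⟩ 0
    exact absurd h2 (by omega)
  classical
  set m : ℕ := I / 2 + 1 with hm
  have hm1 : 1 ≤ m := by omega
  have hI2m : I ≤ 2 * m - 1 := by omega
  have key : n ≤ k * m := by
    by_contra hlt
    push_neg at hlt
    -- hlt : k * m < n
    have lip : ∀ j s d, ((p j (s + d)).val ≤ (p j s).val + d) ∧
        ((p j s).val ≤ (p j (s + d)).val + d) := by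
      intro j s d
      induction d with
      | zero => simp
      | succ d ih =>
        have e : s + (d + 1) = (s + d) + 1 := by omega
        rw [e]
        have h := hstep j (s + d)
        omega
    have drift_fwd : ∀ s t x, s ≤ t →
        (Finset.univ.filter (fun j => (p j s).val ≤ x)).card ≤
        (Finset.univ.filter (fun j => (p j t).val ≤ x + (t - s))).card := by
      intro s t x hst
      apply Finset.card_le_card
      intro j hj
      simp only [Finset.mem_filter, Finset.mem_univ, true_and] at hj ⊢
      have h := (lip j s (t - s)).1
      have e : s + (t - s) = t := by omega
      rw [e] at h
      omega
    have drift_bwd : ∀ s t x, s ≤ t →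
        (Finset.univ.filter (fun j => (p j t).val ≤ x)).card ≤
        (Finset.univ.filter (fun j => (p j s).val ≤ x + (t - s))).card := by
      intro s t x hst
      apply Finset.card_le_card
      intro j hj
      simp only [Finset.mem_filter, Finset.mem_univ, true_and] at hj ⊢
      have h := (lip j s (t - s)).2
      have e : s + (t - s) = t := by omega
      rw [e] at h
      omega
    have nmono : ∀ t x y, x ≤ y →
        (Finset.univ.filter (fun j => (p j t).val ≤ x)).card ≤
        (Finset.univ.filter (fun j => (p j t).val ≤ y)).card := by
      intro t x y hxy
      apply Finset.card_le_card
      intro j hj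
      simp only [Finset.mem_filter, Finset.mem_univ, true_and] at hj ⊢
      omega
    have main : ∀ i, i ≤ k → ∀ t, i * I ≤ t →
        i ≤ (Finset.univ.filter (fun j => (p j t).val ≤ i * m - 1)).card := by
      intro i
      induction i with
      | zero => intro _ t _; exact Nat.zero_le _
      | succ i ih =>
        intro hik t ht
        have hsmI : (i + 1) * I = i * I + I := Nat.succ_mul i I
        have hsmm : (i + 1) * m = i * m + m := Nat.succ_mul i m
        have hwlt : i * m < n := by
          have h1 : i * m ≤ k * m := Nat.mul_le_mul_right m (by omega)
          omega
        have visit_bound : ∀ s, i * I ≤ s → ∀ j₀, (p j₀ s).val = i * m →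
            i + 1 ≤ (Finset.univ.filter (fun j => (p j s).val ≤ i * m)).card := by
          intro s hs j₀ hj₀
          have hIH := ih (by omega) s hs
          rcases Nat.eq_zero_or_pos i with hi0 | hip
          · subst hi0
            have hj0mem : j₀ ∈ Finset.univ.filter (fun j => (p j s).val ≤ 0 * m) := by
              simp only [Finset.mem_filter, Finset.mem_univ, true_and]
              omega
            have hpos := Finset.card_pos.mpr ⟨j₀, hj0mem⟩
            omega
          · have him : 0 < i * m := Nat.mul_pos hip hm1
            have hj0notin : j₀ ∉ Finset.univ.filter (fun j => (p j s).val ≤ i * m - 1) := by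
              simp only [Finset.mem_filter, Finset.mem_univ, true_and]
              omega
            have hsub : insert j₀ (Finset.univ.filter (fun j => (p j s).val ≤ i * m - 1)) ⊆
                Finset.univ.filter (fun j => (p j s).val ≤ i * m) := by
              intro x hx
              rcases Finset.mem_insert.mp hx with h | h
              · subst h
                simp only [Finset.mem_filter, Finset.mem_univ, true_and]
                omega
              · simp only [Finset.mem_filter, Finset.mem_univ, true_and] at h ⊢
                omega
            have hcard := Finset.card_insert_of_notMem hj0notin
            have hle := Finset.card_le_card hsub
            omega
        obtain ⟨r', hr1, hr2, j', hj'⟩ := hcover ⟨i * m, hwlt⟩ (t - (I - 1))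
        have hj'v : (p j' r').val = i * m := by rw [hj']
        have hr't : r' ≤ t := by omega
        set Vis : Finset ℕ := (Finset.range (t + 1)).filter
          (fun s => ∃ j, (p j s).val = i * m) with hVis
        have hr'mem : r' ∈ Vis := by
          simp only [hVis, Finset.mem_filter, Finset.mem_range]
          exact ⟨by omega, j', hj'v⟩
        have hVne : Vis.Nonempty := ⟨r', hr'mem⟩
        set u := Vis.max' hVne with hu
        have humem := Vis.max'_mem hVne
        rw [← hu] at humem
        simp only [hVis, Finset.mem_filter, Finset.mem_range] at humem
        obtain ⟨hut, j₀, hj₀⟩ := humem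
        have hur' : r' ≤ u := Finset.le_max' Vis r' hr'mem
        have huI : i * I ≤ u := by omega
        by_cases hA : t ≤ u + (m - 1)
        · have h1 := visit_bound u huI j₀ hj₀
          have h2 := drift_fwd u t (i * m) (by omega)
          have h3 := nmono t (i * m + (t - u)) ((i + 1) * m - 1) (by omega)
          omega
        · obtain ⟨u', hu'1, hu'2, j₁, hj₁⟩ := hcover ⟨i * m, hwlt⟩ (u + 1)
          have hj₁v : (p j₁ u').val = i * m := by rw [hj₁]
          have hu't : t < u' := by
            by_contra hc
            push_neg at hc
            have hmem : u' ∈ Vis := by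
              simp only [hVis, Finset.mem_filter, Finset.mem_range]
              exact ⟨by omega, j₁, hj₁v⟩
            have := Finset.le_max' Vis u' hmem
            omega
          have h1 := visit_bound u' (by omega) j₁ hj₁v
          have h2 := drift_bwd t u' (i * m) (by omega)
          have h3 := nmono t (i * m + (u' - t)) ((i + 1) * m - 1) (by omega)
          omega
    -- final contradiction
    obtain ⟨s, hs1, hs2, j, hj⟩ := hcover ⟨n - 1, by omega⟩ (k * I)
    have hjv : (p j s).val = n - 1 := by rw [hj]
    have h1 := main k le_rfl s hs1
    have hkm : 0 < k * m := Nat.mul_pos hk hm1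
    have hjnotin : j ∉ Finset.univ.filter (fun j' => (p j' s).val ≤ k * m - 1) := by
      simp only [Finset.mem_filter, Finset.mem_univ, true_and]
      omega
    have hcard := Finset.card_insert_of_notMem hjnotin
    have hle := Finset.card_le_univ
      (insert j (Finset.univ.filter (fun j' => (p j' s).val ≤ k * m - 1)))
    simp only [Finset.card_univ, Fintype.card_fin] at hle
    omega
  have h2 : 2 * (k * (I / 2)) ≤ k * I := by
    have h3 : 2 * (I / 2) ≤ I := by omega
    calc 2 * (k * (I / 2)) = k * (2 * (I / 2)) := by ring
    _ ≤ k * I := Nat.mul_le_mul_left k h3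
  have h4 : k * m = k * (I / 2) + k := by rw [hm]; ring
  omega
end

section
/- Single agent containment in an unknown dynamic ring: for any function p : ℕ → ZMod n modeling an agent that each round either stays or attempts to cross one of its two incident edges, there exists an adaptive adversary (a choice of at most one missing edge per round, allowed to depend on the agent's intended move) such that the agent never leaves the two-node set {p(0), p(0)+1}; hence a single agent visits at most 2 nodes. -/
section Adv

variable (n : ℕ) [NeZero n] (s : ZMod n) (σ : List (Option (ZMod n)) → ℤ)

/-- One step of the adversary/system dynamics: state is (history, position). -/
def advStep (st : List (Option (ZMod n)) × ZMod n) :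
    List (Option (ZMod n)) × ZMod n :=
  let m := σ st.1
  let q := st.2
  let e : Option (ZMod n) :=
    if q = s ∧ m = -1 then some (s - 1)
    else if q = s + 1 ∧ m = 1 then some q else none
  (st.1 ++ [e],
    if (m = 1 ∧ e = some q) ∨ (m = -1 ∧ e = some (q - 1)) then q
    else q + ((m : ℤ) : ZMod n))

def advState : ℕ → List (Option (ZMod n)) × ZMod n
  | 0 => ([], s)
  | r + 1 => advStep n s σ (advState r)

def advMiss (r : ℕ) : Option (ZMod n) :=
  let m := σ (advState n s σ r).1
  let q := (advState n s σ r).2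
  if q = s ∧ m = -1 then some (s - 1)
  else if q = s + 1 ∧ m = 1 then some q else none

lemma advState_fst (r : ℕ) :
    (advState n s σ r).1 = List.ofFn (fun i : Fin r => advMiss n s σ i) := by
  induction r with
  | zero => simp [advState]
  | succ r ih =>
    rw [List.ofFn_succ']
    show (advStep n s σ (advState n s σ r)).1 = _
    simp [advStep, advMiss, ih]

end Adv

/-- Single-agent containment in an unknown dynamic ring (`n ≥ 3`): the agent's
strategy `σ` maps the history of observed missing edges to an intended move in
`{-1, 0, 1}` (the clockwise edge at node `v` is labelled `v`).  There is an
adaptive adversary, i.e. a choice `miss` of at most one missing edge per round,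
such that the resulting trajectory (the intended move succeeds unless the
corresponding incident edge is the missing one) never leaves `{s, s + 1}`;
hence a single agent visits at most `2` nodes. -/
theorem stmt19 (n : ℕ) [NeZero n] (hn : 3 ≤ n) (s : ZMod n)
    (σ : List (Option (ZMod n)) → ℤ)
    (hσ : ∀ h, σ h = -1 ∨ σ h = 0 ∨ σ h = 1) :
    ∃ miss : ℕ → Option (ZMod n),
      ∀ p : ℕ → ZMod n, p 0 = s →
        (∀ r, p (r + 1) =
          if (σ (List.ofFn (fun i : Fin r => miss i)) = 1 ∧ miss r = some (p r)) ∨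
             (σ (List.ofFn (fun i : Fin r => miss i)) = -1 ∧ miss r = some (p r - 1))
          then p r
          else p r + ((σ (List.ofFn (fun i : Fin r => miss i)) : ℤ) : ZMod n)) →
        ∀ r, p r = s ∨ p r = s + 1 := by
  haveI : Fact (1 < n) := ⟨by omega⟩
  have hone : (1 : ZMod n) ≠ 0 := one_ne_zero
  have hss : s ≠ s + 1 := by
    simp [left_eq_add]
  refine ⟨advMiss n s σ, ?_⟩
  intro p hp0 hrec
  -- p equals the simulated trajectory
  have key : ∀ r, p r = (advState n s σ r).2 := by
    intro r
    induction r with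
    | zero => simpa [advState] using hp0
    | succ r ih =>
      have h1 := hrec r
      rw [← advState_fst n s σ r] at h1
      have hmiss : advMiss n s σ r =
          (if (advState n s σ r).2 = s ∧ σ (advState n s σ r).1 = -1 then
            some (s - 1)
          else if (advState n s σ r).2 = s + 1 ∧ σ (advState n s σ r).1 = 1 then
            some (advState n s σ r).2 else none) := rfl
      show p (r + 1) = (advStep n s σ (advState n s σ r)).2
      rw [h1, ih, hmiss]
      simp only [advStep]
  -- the simulated position stays in {s, s+1}
  have inv : ∀ r, (advState n s σ r).2 = s ∨ (advState n s σ r).2 = s + 1 := by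
    intro r
    induction r with
    | zero => left; rfl
    | succ r ih =>
      show (advStep n s σ (advState n s σ r)).2 = s ∨ _
      rcases hσ (advState n s σ r).1 with h | h | h <;>
        rcases ih with h2 | h2 <;>
          simp [advState, advStep, h, h2, hss, Ne.symm hss, sub_eq_iff_eq_add,
            add_assoc]
  intro r
  rw [key r]
  exact inv r
end
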